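/- Let X = GC(G, S, α) be a generalized Cayley graph on a finite abelian group G of odd order. Then there exist finite abelian groups G₁ and G₂ of odd order (namely G₁ = Fix(α) and G₂ = ω_α(G)) and a subset S̄ ⊆ (G₁ \ {1}) × G₂ with the property that (s₁, s₂) ∈ S̄ if and only if (s₁⁻¹, s₂) ∈ S̄, such that X is isomorphic to the simple graph Y on vertex set G₁ × G₂ whose edges are exactly the pairs {(g₁, g₂), (g₁·s₁, g₂⁻¹·s₂)} for (g₁, g₂) ∈ G₁ × G₂ and (s₁, s₂) ∈ S̄. -/

import Mathlib

/-- The generalized Cayley graph `GC(G, S, α)`. -/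
def GC {G : Type*} [Group G] (α : G ≃* G) (S : Set G)
    (h1 : ∀ x : G, α (α x) = x)
    (h2 : ∀ x : G, α x⁻¹ * x ∉ S)
    (h3 : ⇑α '' S⁻¹ = S) : SimpleGraph G where
  Adj x y := α x⁻¹ * y ∈ S
  symm := ⟨by
    intro x y hxy
    have hmem : (α x⁻¹ * y)⁻¹ ∈ S⁻¹ := by simpa [Set.mem_inv] using hxy
    have himg : α ((α x⁻¹ * y)⁻¹) ∈ ⇑α '' S⁻¹ := Set.mem_image_of_mem _ hmem
    rw [h3] at himg
    simpa [mul_inv_rev, map_mul, map_inv, h1] using himg⟩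
  loopless := ⟨fun x hx => h2 x hx⟩

/-- `Fix(α)`, the subgroup of elements fixed by `α`. -/
def fixSubgroup {G : Type*} [Group G] (α : G ≃* G) : Subgroup G where
  carrier := {g : G | α g = g}
  one_mem' := by simp
  mul_mem' := by
    intro a b ha hb
    simp only [Set.mem_setOf_eq] at *
    rw [map_mul, ha, hb]
  inv_mem' := by
    intro a ha
    simp only [Set.mem_setOf_eq] at *
    rw [map_inv, ha]

/-- `ω_α(G) = {α(g)·g⁻¹ : g ∈ G}`, a subgroup when `G` is abelian. -/
def omegaSubgroup {G : Type*} [CommGroup G] (α : G ≃* G) : Subgroup G where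
  carrier := Set.range fun g : G => α g * g⁻¹
  one_mem' := ⟨1, by simp⟩
  mul_mem' := by
    rintro _ _ ⟨a, rfl⟩ ⟨b, rfl⟩
    exact ⟨a * b, by simp only [map_mul, mul_inv_rev]; ac_rfl⟩
  inv_mem' := by
    rintro _ ⟨a, rfl⟩
    exact ⟨a⁻¹, by simp only [map_inv, mul_inv_rev, inv_inv]; exact mul_comm _ _⟩

/-- every generalized Cayley graph on a finite abelian group `G` of odd order
is isomorphic to the graph `Y` on `G₁ × G₂` (`G₁ = Fix(α)`, `G₂ = ω_α(G)`, both finite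
abelian of odd order) whose edges are exactly the pairs `{(g₁,g₂), (g₁s₁, g₂⁻¹s₂)}` for
`(s₁,s₂)` in a set `S̄ ⊆ (G₁ \ {1}) × G₂` with `(s₁,s₂) ∈ S̄ ↔ (s₁⁻¹,s₂) ∈ S̄`. -/
theorem stmt_6 {G : Type*} [CommGroup G] [Fintype G] (hodd : Odd (Fintype.card G))
    (α : G ≃* G) (S : Set G)
    (h1 : ∀ x : G, α (α x) = x)
    (h2 : ∀ x : G, α x⁻¹ * x ∉ S)
    (h3 : ⇑α '' S⁻¹ = S) :
    Odd (Nat.card (fixSubgroup α)) ∧ Odd (Nat.card (omegaSubgroup α)) ∧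
    ∃ Sb : Set (fixSubgroup α × omegaSubgroup α),
      (∀ s ∈ Sb, s.1 ≠ 1) ∧
      (∀ s₁ s₂, (s₁, s₂) ∈ Sb ↔ (s₁⁻¹, s₂) ∈ Sb) ∧
      ∃ Y : SimpleGraph (fixSubgroup α × omegaSubgroup α),
        (∀ a b, Y.Adj a b ↔ ∃ s ∈ Sb, b = (a.1 * s.1, a.2⁻¹ * s.2)) ∧
        Nonempty (GC α S h1 h2 h3 ≃g Y) := by
  classical
  obtain ⟨m, hm⟩ := hodd
  set k := m + 1 with hk
  have hsq : ∀ g : G, (g ^ k) ^ 2 = g := by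
    intro g
    have h0 : g ^ Fintype.card G = 1 := pow_card_eq_one
    have hke : k * 2 = Fintype.card G + 1 := by omega
    rw [← pow_mul, hke, pow_succ, h0, one_mul]
  have hfix : ∀ f : fixSubgroup α, α (f : G) = f := fun f => f.2
  have homeg : ∀ w : omegaSubgroup α, α (w : G) = (w : G)⁻¹ := by
    rintro ⟨_, g, rfl⟩
    simp only [map_mul, map_inv, h1, mul_inv_rev, inv_inv]
  have memfix : ∀ x : G, α x * x ∈ fixSubgroup α := fun x => by
    show α (α x * x) = α x * x
    rw [map_mul, h1, mul_comm]
  have memome : ∀ x : G, (α x)⁻¹ * x ∈ omegaSubgroup α := fun x =>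
    ⟨x⁻¹, by show α x⁻¹ * x⁻¹⁻¹ = (α x)⁻¹ * x; rw [map_inv, inv_inv]⟩
  have key : ∀ f w : G, α f = f → α w = w⁻¹ →
      α ((f * w) ^ k) * (f * w) ^ k = f ∧ (α ((f * w) ^ k))⁻¹ * (f * w) ^ k = w := by
    intro f w hf hw
    have hα : α ((f * w) ^ k) = (f * w⁻¹) ^ k := by rw [map_pow, map_mul, hf, hw]
    constructor
    · have e1 : f * w⁻¹ * (f * w) = f ^ 2 := by
        rw [mul_mul_mul_comm, inv_mul_cancel, mul_one, sq]
      rw [hα, ← mul_pow, e1, ← pow_mul, mul_comm 2 k, pow_mul, hsq]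
    · have e2 : (f * w⁻¹)⁻¹ * (f * w) = w ^ 2 := by
        rw [mul_inv_rev, inv_inv, mul_assoc, inv_mul_cancel_left, sq]
      rw [hα, ← inv_pow, ← mul_pow, e2, ← pow_mul, mul_comm 2 k, pow_mul, hsq]
  let ψ : (fixSubgroup α × omegaSubgroup α) ≃ G :=
  { toFun := fun p => (p.1 : G) * (p.2 : G)
    invFun := fun g => (⟨α (g ^ k) * g ^ k, memfix _⟩, ⟨(α (g ^ k))⁻¹ * g ^ k, memome _⟩)
    left_inv := by
      rintro ⟨f, w⟩
      obtain ⟨k1, k2⟩ := key f w (hfix f) (homeg w)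
      exact Prod.ext (Subtype.ext k1) (Subtype.ext k2)
    right_inv := fun g => by
      show α (g ^ k) * g ^ k * ((α (g ^ k))⁻¹ * g ^ k) = g
      rw [mul_mul_mul_comm, mul_inv_cancel, one_mul, ← sq, hsq] }
  have hS : ∀ x : G, x ∈ S ↔ α x⁻¹ ∈ S := by
    intro x
    conv_rhs => rw [← h3]
    rw [α.injective.mem_set_image, Set.inv_mem_inv]
  have hadj : ∀ a1 b1 a2 b2 : G, α a1 = a1 → α a2 = a2⁻¹ →
      α (a1 * a2)⁻¹ * (b1 * b2) = (a1⁻¹ * b1) * (a2 * b2) := by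
    intro a1 b1 a2 b2 ha1 ha2
    rw [mul_inv_rev, map_mul, map_inv, map_inv, ha1, ha2, inv_inv]
    ac_rfl
  have oddH : ∀ H : Subgroup G, Odd (Nat.card H) := by
    intro H
    have hmi := H.card_mul_index
    have hoG : Odd (Nat.card G) := by
      rw [Nat.card_eq_fintype_card]; exact ⟨m, hm⟩
    rw [← hmi] at hoG
    exact (Nat.odd_mul.mp hoG).1
  refine ⟨oddH _, oddH _,
    {s : fixSubgroup α × omegaSubgroup α | (s.1 : G) * (s.2 : G) ∈ S}, ?_, ?_,
    (GC α S h1 h2 h3).comap ψ, ?_, ?_⟩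
  · rintro ⟨s1, s2⟩ hs h1'
    obtain ⟨g, hg⟩ := s2.2
    apply h2 g⁻¹
    have hs' : (s1 : G) * (s2 : G) ∈ S := hs
    rw [show s1 = 1 from h1'] at hs'
    have : (s2 : G) ∈ S := by simpa using hs'
    simpa [hg] using this
  · intro s₁ s₂
    have hdir : ∀ (t₁ : fixSubgroup α) (t₂ : omegaSubgroup α),
        (t₁ : G) * t₂ ∈ S → (t₁ : G)⁻¹ * t₂ ∈ S := by
      intro t₁ t₂ h
      have h' := (hS _).mp h
      rw [mul_inv_rev, map_mul, map_inv, map_inv, hfix, homeg, inv_inv] at h'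
      rwa [mul_comm] at h'
    constructor
    · intro h
      exact hdir s₁ s₂ h
    · intro h
      have := hdir s₁⁻¹ s₂ h
      simpa using this
  · intro a b
    show α ((a.1 : G) * a.2)⁻¹ * ((b.1 : G) * b.2) ∈ S ↔ _
    constructor
    · intro h
      refine ⟨(a.1⁻¹ * b.1, a.2 * b.2), ?_, ?_⟩
      · show ((a.1⁻¹ * b.1 : fixSubgroup α) : G) * ((a.2 * b.2 : omegaSubgroup α) : G) ∈ S
        push_cast
        rw [← hadj _ _ _ _ (hfix a.1) (homeg a.2)]
        exact h
      · refine Prod.ext ?_ ?_ <;> simp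
    · rintro ⟨s, hs, rfl⟩
      have heq := hadj (a.1 : G) ((a.1 : G) * s.1) (a.2 : G) ((a.2 : G)⁻¹ * s.2)
        (hfix a.1) (homeg a.2)
      rw [inv_mul_cancel_left, mul_inv_cancel_left] at heq
      show α ((a.1 : G) * a.2)⁻¹ *
        (((a.1 * s.1 : fixSubgroup α) : G) * ((a.2⁻¹ * s.2 : omegaSubgroup α) : G)) ∈ S
      push_cast
      rw [heq]
      exact hs
  · exact ⟨(SimpleGraph.Iso.comap ψ (GC α S h1 h2 h3)).symm⟩
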